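/- Assume the semigroup satisfies LSI(c): H(f) ≤ c·E(f,f) for all f > 0, and the weak regularity condition with constant β: β·E(I_{2,1}f, I_{2,1}f) ≤ E(log(ρ^{1/2} f ρ^{1/2}) − log ρ, f) for all f > 0, where I_{2,1}(f) = ρ^{−1/4}(ρ^{1/2} f ρ^{1/2})^{1/2} ρ^{−1/4}. Then the modified log-Sobolev inequality holds with constant β/(2c): (β/(2c))·E(f) ≤ E(log(ρ^{1/2} f ρ^{1/2}) − log ρ, f) for all f > 0. -/

import Mathlib

open MeasureTheory
open scoped ComplexOrder
open scoped Matrix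

noncomputable section

/-- `ρ^p` (real power) via functional calculus. -/
def rpowM {n : ℕ} (ρ : Matrix (Fin n) (Fin n) ℂ) (p : ℝ) : Matrix (Fin n) (Fin n) ℂ :=
  cfc (fun x : ℝ => x ^ p) ρ

/-- Operator logarithm via functional calculus. -/
def logM {n : ℕ} (g : Matrix (Fin n) (Fin n) ℂ) : Matrix (Fin n) (Fin n) ℂ :=
  cfc Real.log g

/-- Operator-valued entropy
`T₂(f) = ρ^{−1/4}(ρ^{1/4} f ρ^{1/4}) log(ρ^{1/4} f ρ^{1/4}) ρ^{−1/4}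
− (1/4)(f log ρ + (log ρ) f)`. -/
def T2 {n : ℕ} (ρ f : Matrix (Fin n) (Fin n) ℂ) : Matrix (Fin n) (Fin n) ℂ :=
  rpowM ρ (-(1/4)) * ((rpowM ρ (1/4) * f * rpowM ρ (1/4)) *
      logM (rpowM ρ (1/4) * f * rpowM ρ (1/4))) * rpowM ρ (-(1/4)) -
    (1/4 : ℂ) • (f * logM ρ + logM ρ * f)

/-- Scalar product `⟨f,g⟩ = tr(ρ^{1/2} f* ρ^{1/2} g)`. -/
def inn {n : ℕ} (ρ f g : Matrix (Fin n) (Fin n) ℂ) : ℂ :=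
  (rpowM ρ (1/2) * f.conjTranspose * rpowM ρ (1/2) * g).trace

/-- `‖f‖₂² = tr(|ρ^{1/4} f ρ^{1/4}|²)`. -/
def norm2sq {n : ℕ} (ρ f : Matrix (Fin n) (Fin n) ℂ) : ℝ :=
  (((rpowM ρ (1/4) * f * rpowM ρ (1/4)).conjTranspose *
      (rpowM ρ (1/4) * f * rpowM ρ (1/4))).trace).re

/-- The log-Sobolev functional `H(f) = ⟨f, T₂(f)⟩ − ‖f‖₂² log ‖f‖₂`. -/
def Hfun {n : ℕ} (ρ f : Matrix (Fin n) (Fin n) ℂ) : ℝ :=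
  (inn ρ f (T2 ρ f)).re - norm2sq ρ f * Real.log (Real.sqrt (norm2sq ρ f))

/-- Dirichlet form `E(f,g) = −tr(ρ^{1/2} f* ρ^{1/2} L g)`. -/
def dirichletForm {n : ℕ} (ρ : Matrix (Fin n) (Fin n) ℂ)
    (L : Matrix (Fin n) (Fin n) ℂ →ₗ[ℂ] Matrix (Fin n) (Fin n) ℂ)
    (f g : Matrix (Fin n) (Fin n) ℂ) : ℂ :=
  -(rpowM ρ (1/2) * f.conjTranspose * rpowM ρ (1/2) * L g).trace


/-- Relative entropy `E(f) = tr(ρ^{1/2} f ρ^{1/2}(log(ρ^{1/2} f ρ^{1/2}) − log ρ))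
− ‖f‖₁ log ‖f‖₁`, `‖f‖₁ = tr(ρ^{1/2} f ρ^{1/2})` for positive `f`. -/
def relEntropy {n : ℕ} (ρ f : Matrix (Fin n) (Fin n) ℂ) : ℝ :=
  ((rpowM ρ (1/2) * f * rpowM ρ (1/2) *
      (logM (rpowM ρ (1/2) * f * rpowM ρ (1/2)) - logM ρ)).trace).re -
    ((rpowM ρ (1/2) * f * rpowM ρ (1/2)).trace).re *
      Real.log ((rpowM ρ (1/2) * f * rpowM ρ (1/2)).trace).re

/-- `I_{2,1}(f) = ρ^{−1/4}(ρ^{1/2} f ρ^{1/2})^{1/2} ρ^{−1/4}`. -/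
def I21 {n : ℕ} (ρ f : Matrix (Fin n) (Fin n) ℂ) : Matrix (Fin n) (Fin n) ℂ :=
  rpowM ρ (-(1/4)) * rpowM (rpowM ρ (1/2) * f * rpowM ρ (1/2)) (1/2) * rpowM ρ (-(1/4))


variable {n : ℕ}

lemma contOn (f : ℝ → ℝ) (A : Matrix (Fin n) (Fin n) ℂ) : ContinuousOn f (spectrum ℝ A) := by
  rw [continuousOn_iff_continuous_restrict]
  have : Finite (spectrum ℝ A) := A.finite_real_spectrum
  fun_prop

lemma posDef_conj {A B : Matrix (Fin n) (Fin n) ℂ} (hA : A.PosDef) (hB : IsUnit B) :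
    (Bᴴ * A * B).PosDef := by
  refine Matrix.PosDef.of_dotProduct_mulVec_pos (Matrix.isHermitian_conjTranspose_mul_mul B hA.1) fun x hx => ?_
  have hinj := Matrix.mulVec_injective_iff_isUnit.mpr hB
  have hBx : B *ᵥ x ≠ 0 := fun h => hx (hinj (by simpa using h))
  simpa only [Matrix.star_mulVec, Matrix.dotProduct_mulVec, Matrix.vecMul_vecMul] using
    hA.dotProduct_mulVec_pos hBx

lemma spec_pos {A : Matrix (Fin n) (Fin n) ℂ} (hA : A.PosDef) :
    ∀ x ∈ spectrum ℝ A, 0 < x := by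
  intro x hx
  rw [Matrix.IsHermitian.spectrum_real_eq_range_eigenvalues hA.1] at hx
  obtain ⟨i, rfl⟩ := hx
  exact hA.eigenvalues_pos i

lemma posDef_cfc {A : Matrix (Fin n) (Fin n) ℂ} (hA : A.PosDef) (f : ℝ → ℝ)
    (hf : ∀ x ∈ spectrum ℝ A, 0 < f x) : (cfc f A).PosDef := by
  rw [Matrix.IsHermitian.cfc_eq hA.1, Matrix.IsHermitian.cfc]
  set U : Matrix (Fin n) (Fin n) ℂ := (Matrix.IsHermitian.eigenvectorUnitary hA.1 : Matrix (Fin n) (Fin n) ℂ)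
  have hU : IsUnit Uᴴ := by
    rw [← Matrix.star_eq_conjTranspose]
    exact ⟨⟨star U, U, Unitary.star_mul_self_of_mem (Matrix.IsHermitian.eigenvectorUnitary hA.1).2,
      Unitary.mul_star_self_of_mem (Matrix.IsHermitian.eigenvectorUnitary hA.1).2⟩, rfl⟩
  have hD : (Matrix.diagonal ((Complex.ofReal ∘ f ∘ hA.1.eigenvalues))).PosDef := by
    refine Matrix.PosDef.diagonal fun i => ?_
    have := hf _ (hA.1.eigenvalues_mem_spectrum_real i)
    simpa using Complex.zero_lt_real.mpr this
  have := posDef_conj hD hU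
  simpa [Matrix.star_eq_conjTranspose] using this

lemma contOn' (f : ℝ → ℝ) (s : Set ℝ) (hs : s.Finite) : ContinuousOn f s := by
  rw [continuousOn_iff_continuous_restrict]
  have : Finite s := hs
  fun_prop

lemma rpowM_isSA (ρ : Matrix (Fin n) (Fin n) ℂ) (p : ℝ) : IsSelfAdjoint (rpowM ρ p) :=
  cfc_predicate _ _

lemma rpowM_herm (ρ : Matrix (Fin n) (Fin n) ℂ) (p : ℝ) : (rpowM ρ p)ᴴ = rpowM ρ p :=
  (rpowM_isSA ρ p).star_eq

lemma rpowM_mul {ρ : Matrix (Fin n) (Fin n) ℂ} (hρ : ρ.PosDef) (p q : ℝ) :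
    rpowM ρ p * rpowM ρ q = rpowM ρ (p + q) := by
  rw [rpowM, rpowM, rpowM, ← cfc_mul _ _ ρ (contOn _ _) (contOn _ _)]
  exact cfc_congr fun x hx => (Real.rpow_add (spec_pos hρ x hx) p q).symm

lemma rpowM_zero {ρ : Matrix (Fin n) (Fin n) ℂ} (hρ : ρ.PosDef) : rpowM ρ 0 = 1 := by
  rw [rpowM]
  have h1 : cfc (fun x : ℝ => x ^ (0:ℝ)) ρ = cfc (fun _ : ℝ => (1:ℝ)) ρ :=
    cfc_congr fun x _ => Real.rpow_zero x
  rw [h1]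
  exact cfc_const_one ℝ ρ hρ.1

lemma rpowM_one {ρ : Matrix (Fin n) (Fin n) ℂ} (hρ : ρ.PosDef) : rpowM ρ 1 = ρ := by
  rw [rpowM]
  have h1 : cfc (fun x : ℝ => x ^ (1:ℝ)) ρ = cfc (fun x : ℝ => x) ρ :=
    cfc_congr fun x _ => Real.rpow_one x
  rw [h1]
  exact cfc_id' ℝ ρ hρ.1

lemma logM_rpow_half {A : Matrix (Fin n) (Fin n) ℂ} (hA : A.PosDef) :
    logM (rpowM A (1/2)) = (1/2 : ℝ) • logM A := by
  have hcomp := cfc_comp' Real.log (fun x : ℝ => x ^ ((1:ℝ)/2)) A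
    (contOn' _ _ (Matrix.finite_real_spectrum.image _)) (contOn _ _) hA.1
  rw [logM, rpowM, ← hcomp]
  have h1 : cfc (fun x : ℝ => Real.log (x ^ ((1:ℝ)/2))) A
      = cfc (fun x : ℝ => (1/2 : ℝ) • Real.log x) A := by
    refine cfc_congr fun x hx => ?_
    rw [Real.log_rpow (spec_pos hA x hx)]
    simp [smul_eq_mul]
  rw [h1, cfc_smul (1/2:ℝ) Real.log A (contOn _ _)]
  rfl

lemma logM_comm_rpowM (ρ : Matrix (Fin n) (Fin n) ℂ) (p : ℝ) :
    logM ρ * rpowM ρ p = rpowM ρ p * logM ρ :=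
  (cfc_commute_cfc _ _ ρ).eq

section traceaux
variable (P Q S L : Matrix (Fin n) (Fin n) ℂ)

lemma trace_aux1 (hPQ : P * Q = 1) (hQP : Q * P = 1) :
    ((P*P) * (Q*S*Q) * (P*P) * (Q*(S*L)*Q)).trace = (S*(S*L)).trace := by
  have e1 : ∀ X : Matrix (Fin n) (Fin n) ℂ, P*(Q*X) = X := fun X => by
    rw [← Matrix.mul_assoc, hPQ, Matrix.one_mul]
  have e2 : ∀ X : Matrix (Fin n) (Fin n) ℂ, Q*(P*X) = X := fun X => by
    rw [← Matrix.mul_assoc, hQP, Matrix.one_mul]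
  simp only [Matrix.mul_assoc, e1, e2]
  rw [Matrix.trace_mul_comm]
  simp only [Matrix.mul_assoc, e1, e2, hQP, hPQ, Matrix.mul_one, Matrix.one_mul]

lemma trace_aux2 (hPQ : P * Q = 1) (hQP : Q * P = 1) (hc : L * P = P * L) :
    ((P*P) * (Q*S*Q) * (P*P) * ((Q*S*Q)*L)).trace = (S*(S*L)).trace := by
  have e1 : ∀ X : Matrix (Fin n) (Fin n) ℂ, P*(Q*X) = X := fun X => by
    rw [← Matrix.mul_assoc, hPQ, Matrix.one_mul]
  have e2 : ∀ X : Matrix (Fin n) (Fin n) ℂ, Q*(P*X) = X := fun X => by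
    rw [← Matrix.mul_assoc, hQP, Matrix.one_mul]
  have e3 : ∀ X : Matrix (Fin n) (Fin n) ℂ, L*(P*X) = P*(L*X) := fun X => by
    rw [← Matrix.mul_assoc, hc, Matrix.mul_assoc]
  simp only [Matrix.mul_assoc, e1, e2, e3]
  rw [Matrix.trace_mul_comm]
  simp only [Matrix.mul_assoc, e1, e2, e3, hQP, hPQ, Matrix.mul_one, Matrix.one_mul,
    ← hc]
  simp only [hc, e2]

lemma trace_aux3 (hPQ : P * Q = 1) (hQP : Q * P = 1) (hcP : L * P = P * L)
    (hcQ : L * Q = Q * L) :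
    ((P*P) * (Q*S*Q) * (P*P) * (L*(Q*S*Q))).trace = (S*(S*L)).trace := by
  have e1 : ∀ X : Matrix (Fin n) (Fin n) ℂ, P*(Q*X) = X := fun X => by
    rw [← Matrix.mul_assoc, hPQ, Matrix.one_mul]
  have e2 : ∀ X : Matrix (Fin n) (Fin n) ℂ, Q*(P*X) = X := fun X => by
    rw [← Matrix.mul_assoc, hQP, Matrix.one_mul]
  have e3 : ∀ X : Matrix (Fin n) (Fin n) ℂ, L*(P*X) = P*(L*X) := fun X => by
    rw [← Matrix.mul_assoc, hcP, Matrix.mul_assoc]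
  have e4 : ∀ X : Matrix (Fin n) (Fin n) ℂ, L*(Q*X) = Q*(L*X) := fun X => by
    rw [← Matrix.mul_assoc, hcQ, Matrix.mul_assoc]
  simp only [Matrix.mul_assoc, e1, e2, e3, e4]
  rw [Matrix.trace_mul_comm]
  simp only [Matrix.mul_assoc, e1, e2, e3, e4, hQP, hPQ, Matrix.mul_one, Matrix.one_mul]
  rw [Matrix.trace_mul_comm S (L*S), Matrix.mul_assoc, Matrix.trace_mul_comm L (S*S),
    Matrix.mul_assoc]

end traceaux
lemma posDef_rpowM {ρ : Matrix (Fin n) (Fin n) ℂ} (hρ : ρ.PosDef) (p : ℝ) :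
    (rpowM ρ p).PosDef :=
  posDef_cfc hρ _ fun x hx => Real.rpow_pos_of_pos (spec_pos hρ x hx) p

lemma trace_re_nonneg {A : Matrix (Fin n) (Fin n) ℂ} (hA : A.PosSemidef) :
    0 ≤ A.trace.re := by
  have h : ∀ i, 0 ≤ (A i i).re := fun i => by
    have := hA.re_dotProduct_nonneg (Pi.single i 1)
    simpa [dotProduct, Matrix.mulVec, Pi.single_apply, Finset.sum_ite_eq,
      RCLike.re_to_complex] using this
  rw [Matrix.trace]
  simp only [Complex.re_sum]
  exact Finset.sum_nonneg fun i _ => h i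

lemma relEntropy_eq {ρ f : Matrix (Fin n) (Fin n) ℂ} (hρ : ρ.PosDef) (hf : f.PosDef) :
    relEntropy ρ f = 2 * Hfun ρ (I21 ρ f) := by
  have hRH : (rpowM ρ (1/2))ᴴ = rpowM ρ (1/2) := rpowM_herm ρ _
  have hA : (rpowM ρ (1/2) * f * rpowM ρ (1/2)).PosDef := by
    have := posDef_conj hf (posDef_rpowM hρ (1/2)).isUnit
    rwa [hRH] at this
  have hS : (rpowM (rpowM ρ (1/2) * f * rpowM ρ (1/2)) (1/2)).PosDef :=
    posDef_rpowM hA _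
  have hQH : (rpowM ρ (-(1/4)))ᴴ = rpowM ρ (-(1/4)) := rpowM_herm ρ _
  have hg : (I21 ρ f).PosDef := by
    rw [I21]
    have := posDef_conj hS (posDef_rpowM hρ (-(1/4))).isUnit
    rwa [hQH] at this
  have hgH : (I21 ρ f)ᴴ = I21 ρ f := hg.1
  have hlogS := logM_rpow_half hA
  unfold relEntropy Hfun inn T2 norm2sq
  unfold I21 at hgH hlogS ⊢
  set A := rpowM ρ (1/2) * f * rpowM ρ (1/2) with hAd
  set S := rpowM A (1/2) with hSd
  set LA := logM A with hLAd
  set lρ := logM ρ with hld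
  set P := rpowM ρ (1/4) with hPd
  set Q := rpowM ρ (-(1/4)) with hQd
  set R := rpowM ρ (1/2) with hRd
  have hPQ : P * Q = 1 := by
    rw [hPd, hQd, rpowM_mul hρ]
    norm_num [rpowM_zero hρ]
  have hQP : Q * P = 1 := by
    rw [hPd, hQd, rpowM_mul hρ]
    norm_num [rpowM_zero hρ]
  have hPP : P * P = R := by
    rw [hPd, hRd, rpowM_mul hρ]
    norm_num
  have hSS : S * S = A := by
    rw [hSd, rpowM_mul hA]
    norm_num [rpowM_one hA]
  have hSH : Sᴴ = S := rpowM_herm _ _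
  have hlP : lρ * P = P * lρ := logM_comm_rpowM ρ _
  have hlQ : lρ * Q = Q * lρ := logM_comm_rpowM ρ _
  have hPgP : P * (Q * S * Q) * P = S := by
    have : P * (Q * S * Q) * P = (P*Q) * S * (Q*P) := by simp only [Matrix.mul_assoc]
    rw [this, hPQ, hQP, Matrix.one_mul, Matrix.mul_one]
  rw [hgH, hPgP, hlogS, hSH, hSS]
  rw [Real.log_sqrt (trace_re_nonneg hA.posSemidef)]
  have htr : (R * (Q * S * Q) * R *
      (Q * (S * ((1/2 : ℝ) • LA)) * Q - (1/4 : ℂ) • ((Q * S * Q) * lρ + lρ * (Q * S * Q)))).trace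
      = (1/2 : ℂ) * ((A * (LA - lρ)).trace) := by
    conv_lhs => rw [← hPP]
    simp only [Matrix.mul_smul, Matrix.smul_mul, Matrix.mul_sub, Matrix.mul_add,
      Matrix.trace_sub, Matrix.trace_add, Matrix.trace_smul]
    rw [trace_aux1 P Q S LA hPQ hQP, trace_aux2 P Q S lρ hPQ hQP hlP,
      trace_aux3 P Q S lρ hPQ hQP hlP hlQ]
    rw [← hSS]
    simp only [Matrix.mul_sub, Matrix.trace_sub, Matrix.mul_assoc, smul_eq_mul,
      Complex.real_smul]
    push_cast
    ring
  rw [htr, Complex.mul_re]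
  norm_num
  ring

/-- Proposition 13: LSI(c) together with the weak regularity condition with constant
`β` implies the modified log-Sobolev inequality MLSI(β/(2c)). -/
theorem LSI_and_WRC_implies_MLSI (n : ℕ)
    (L : Matrix (Fin n) (Fin n) ℂ →ₗ[ℂ] Matrix (Fin n) (Fin n) ℂ)
    (ρ : Matrix (Fin n) (Fin n) ℂ) (hρ : ρ.PosDef) (hρtr : ρ.trace = 1)
    (c β : ℝ) (hc : 0 < c) (hβ : 0 < β)
    (hLSI : ∀ f : Matrix (Fin n) (Fin n) ℂ, f.PosDef →
      Hfun ρ f ≤ c * (dirichletForm ρ L f f).re)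
    (hWRC : ∀ f : Matrix (Fin n) (Fin n) ℂ, f.PosDef →
      β * (dirichletForm ρ L (I21 ρ f) (I21 ρ f)).re ≤
        (dirichletForm ρ L (logM (rpowM ρ (1/2) * f * rpowM ρ (1/2)) - logM ρ) f).re) :
    ∀ f : Matrix (Fin n) (Fin n) ℂ, f.PosDef →
      β / (2 * c) * relEntropy ρ f ≤
        (dirichletForm ρ L (logM (rpowM ρ (1/2) * f * rpowM ρ (1/2)) - logM ρ) f).re := by
  intro f hf
  -- positivity facts
  have hRH : (rpowM ρ (1/2))ᴴ = rpowM ρ (1/2) := rpowM_herm ρ _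
  have hA : (rpowM ρ (1/2) * f * rpowM ρ (1/2)).PosDef := by
    have := posDef_conj hf (posDef_rpowM hρ (1/2)).isUnit
    rwa [hRH] at this
  have hS : (rpowM (rpowM ρ (1/2) * f * rpowM ρ (1/2)) (1/2)).PosDef :=
    posDef_rpowM hA _
  have hQH : (rpowM ρ (-(1/4)))ᴴ = rpowM ρ (-(1/4)) := rpowM_herm ρ _
  have hg : (I21 ρ f).PosDef := by
    rw [I21]
    have := posDef_conj hS (posDef_rpowM hρ (-(1/4))).isUnit
    rwa [hQH] at this
  have h1 := hLSI _ hg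
  have h2 := hWRC f hf
  have key := relEntropy_eq hρ hf
  rw [key]
  have hbc : 0 < β / c := div_pos hβ hc
  have e1 : β / (2 * c) * (2 * Hfun ρ (I21 ρ f)) = (β / c) * Hfun ρ (I21 ρ f) := by
    field_simp
  rw [e1]
  calc (β / c) * Hfun ρ (I21 ρ f)
      ≤ (β / c) * (c * (dirichletForm ρ L (I21 ρ f) (I21 ρ f)).re) := by
        exact mul_le_mul_of_nonneg_left h1 hbc.le
    _ = β * (dirichletForm ρ L (I21 ρ f) (I21 ρ f)).re := by
        field_simp
    _ ≤ _ := h2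


end
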